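/- The double series ∑_{n≥1} ∑_{m≥1} ( ∑_{l≥0} 1/((4n+2l+3)(4n+2l+5)(4m+2l+3)(4m+2l+5)) )^2 converges, and is bounded above by π²/576 · π⁴/64 (equivalently, (64/π⁴) times the double series is at most π²/576). -/

import Mathlib

set_option maxHeartbeats 1000000

open Filter Topology

/-- Telescoping sum. -/
lemma telesum {c : ℝ} (hc : 0 < c) :
    HasSum (fun l : ℕ => 1 / ((c + 2*l) * (c + 2*l + 2))) (1/(2*c)) := by
  have hpos : ∀ l : ℕ, (0:ℝ) < c + 2*l := fun l => by positivity
  rw [hasSum_iff_tendsto_nat_of_nonneg (fun l => by positivity)]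
  have hsum : ∀ N : ℕ, ∑ i ∈ Finset.range N, (1:ℝ) / ((c + 2*i) * (c + 2*i + 2))
      = 1/(2*c) - 1/(2*(c + 2*N)) := by
    intro N
    have := Finset.sum_range_sub' (fun i : ℕ => 1/(2*(c + 2*(i:ℝ)))) N
    simp only [Nat.cast_zero, mul_zero, add_zero] at this
    rw [← this]
    apply Finset.sum_congr rfl
    intro i _
    have h1 : (0:ℝ) < c + 2*i := hpos i
    have h2 : (0:ℝ) < c + 2*(i+1:ℕ) := hpos (i+1)
    push_cast at h2 ⊢
    field_simp
    ring
  simp only [hsum]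
  have : Tendsto (fun N : ℕ => 1/(2*(c + 2*(N:ℝ)))) atTop (𝓝 0) := by
    simp only [one_div]
    apply Tendsto.comp tendsto_inv_atTop_zero
    apply tendsto_atTop_mono (fun n : ℕ => by
      have : (0:ℝ) ≤ (n:ℝ) := Nat.cast_nonneg n
      nlinarith [hc] : ∀ n : ℕ, (n:ℝ) ≤ 2*(c + 2*(n:ℝ)))
    exact tendsto_natCast_atTop_atTop
  simpa using tendsto_const_nhds.sub this

/-- Inner sum bound. -/
lemma inner_bound {a b : ℝ} (ha : 1 ≤ a) (hb : 1 ≤ b) :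
    Summable (fun l : ℕ => (1:ℝ) /
      ((4*a + 2*l + 3) * (4*a + 2*l + 5) * (4*b + 2*l + 3) * (4*b + 2*l + 5))) ∧
    (∑' l : ℕ, (1:ℝ) /
      ((4*a + 2*l + 3) * (4*a + 2*l + 5) * (4*b + 2*l + 3) * (4*b + 2*l + 5)))
      ≤ 1 / (128 * a^2 * b) := by
  set K : ℝ := 1/((4*a+3)*(4*a+5)) with hK
  have hc : (0:ℝ) < 4*b + 3 := by linarith
  have htel := (telesum hc).mul_left K
  have hgsummable := htel.summable
  have hle : ∀ l : ℕ, (1:ℝ) /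
      ((4*a + 2*l + 3) * (4*a + 2*l + 5) * (4*b + 2*l + 3) * (4*b + 2*l + 5))
      ≤ K * (1 / ((4*b+3 + 2*l) * (4*b+3 + 2*l + 2))) := by
    intro l
    have hl : (0:ℝ) ≤ (l:ℝ) := Nat.cast_nonneg l
    have hA : (0:ℝ) < (4*a+3)*(4*a+5) := by nlinarith
    have hB : (0:ℝ) < (4*b+3 + 2*l) * (4*b+3 + 2*l + 2) := by nlinarith
    rw [hK, div_mul_div_comm, one_mul]
    apply one_div_le_one_div_of_le (by positivity)
    have h1 : (4*a+3)*(4*a+5) ≤ (4*a + 2*l + 3) * (4*a + 2*l + 5) := by nlinarith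
    calc (4*a+3)*(4*a+5) * ((4*b+3 + 2*l) * (4*b+3 + 2*l + 2))
        ≤ (4*a + 2*l + 3) * (4*a + 2*l + 5) * ((4*b+3 + 2*l) * (4*b+3 + 2*l + 2)) :=
          mul_le_mul_of_nonneg_right h1 hB.le
      _ = (4*a + 2*l + 3) * (4*a + 2*l + 5) * (4*b + 2*l + 3) * (4*b + 2*l + 5) := by ring
  have hnonneg : ∀ l : ℕ, (0:ℝ) ≤ (1:ℝ) /
      ((4*a + 2*l + 3) * (4*a + 2*l + 5) * (4*b + 2*l + 3) * (4*b + 2*l + 5)) := by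
    intro l
    have hl : (0:ℝ) ≤ (l:ℝ) := Nat.cast_nonneg l
    positivity
  have hsum : Summable (fun l : ℕ => (1:ℝ) /
      ((4*a + 2*l + 3) * (4*a + 2*l + 5) * (4*b + 2*l + 3) * (4*b + 2*l + 5))) :=
    Summable.of_nonneg_of_le hnonneg hle hgsummable
  refine ⟨hsum, ?_⟩
  have h2 := Summable.tsum_le_tsum hle hsum hgsummable
  rw [htel.tsum_eq] at h2
  refine h2.trans ?_
  rw [hK]
  rw [div_mul_div_comm, one_mul]
  apply one_div_le_one_div_of_le (by nlinarith)
  nlinarith [sq_nonneg (a-1), sq_nonneg b, sq_nonneg a]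

theorem stmt_1 :
    Summable (fun p : ℕ+ × ℕ+ =>
      (∑' l : ℕ, (1 : ℝ) /
        ((4 * (p.1 : ℝ) + 2 * (l : ℝ) + 3) * (4 * (p.1 : ℝ) + 2 * (l : ℝ) + 5) *
         (4 * (p.2 : ℝ) + 2 * (l : ℝ) + 3) * (4 * (p.2 : ℝ) + 2 * (l : ℝ) + 5))) ^ 2) ∧
    (∑' p : ℕ+ × ℕ+,
      (∑' l : ℕ, (1 : ℝ) /
        ((4 * (p.1 : ℝ) + 2 * (l : ℝ) + 3) * (4 * (p.1 : ℝ) + 2 * (l : ℝ) + 5) *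
         (4 * (p.2 : ℝ) + 2 * (l : ℝ) + 3) * (4 * (p.2 : ℝ) + 2 * (l : ℝ) + 5))) ^ 2)
      ≤ Real.pi ^ 2 / 576 * (Real.pi ^ 4 / 64) := by
  set S : ℕ+ × ℕ+ → ℝ := fun p =>
      (∑' l : ℕ, (1 : ℝ) /
        ((4 * (p.1 : ℝ) + 2 * (l : ℝ) + 3) * (4 * (p.1 : ℝ) + 2 * (l : ℝ) + 5) *
         (4 * (p.2 : ℝ) + 2 * (l : ℝ) + 3) * (4 * (p.2 : ℝ) + 2 * (l : ℝ) + 5))) ^ 2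
      with hS
  -- pnat has sums
  have hinj : Function.Injective (fun n : ℕ+ => (n : ℕ)) := fun a b h => PNat.coe_injective h
  have hzero : ∀ x : ℕ, x ∉ Set.range (fun n : ℕ+ => (n : ℕ)) → x = 0 := by
    intro x hx
    by_contra h
    exact hx ⟨⟨x, Nat.pos_of_ne_zero h⟩, rfl⟩
  have hP4 : HasSum (fun n : ℕ+ => (1:ℝ)/(n:ℝ)^4) (Real.pi^4/90) := by
    have := (Function.Injective.hasSum_iff (f := fun x : ℕ => (1:ℝ)/(x:ℝ)^4) hinj
      (fun x hx => by rw [hzero x hx]; norm_num)).mpr hasSum_zeta_four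
    simpa [Function.comp_def] using this
  have hP2 : HasSum (fun n : ℕ+ => (1:ℝ)/(n:ℝ)^2) (Real.pi^2/6) := by
    have := (Function.Injective.hasSum_iff (f := fun x : ℕ => (1:ℝ)/(x:ℝ)^2) hinj
      (fun x hx => by rw [hzero x hx]; norm_num)).mpr hasSum_zeta_two
    simpa [Function.comp_def] using this
  have hMsummable : Summable (fun p : ℕ+ × ℕ+ => ((1:ℝ)/(p.1:ℝ)^4) * ((1:ℝ)/(p.2:ℝ)^2)) :=
    Summable.mul_of_nonneg hP4.summable hP2.summable
      (fun n => by positivity) (fun n => by positivity)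
  have hM : HasSum (fun p : ℕ+ × ℕ+ => (1/16384) * (((1:ℝ)/(p.1:ℝ)^4) * ((1:ℝ)/(p.2:ℝ)^2)))
      ((1/16384) * (Real.pi^4/90 * (Real.pi^2/6))) :=
    (hP4.mul hP2 hMsummable).mul_left _
  -- pointwise bound
  have hbound : ∀ p : ℕ+ × ℕ+,
      S p ≤ (1/16384) * (((1:ℝ)/(p.1:ℝ)^4) * ((1:ℝ)/(p.2:ℝ)^2)) := by
    intro p
    obtain ⟨n, m⟩ := p
    have hn : (1:ℝ) ≤ (n:ℝ) := by exact_mod_cast n.one_le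
    have hm : (1:ℝ) ≤ (m:ℝ) := by exact_mod_cast m.one_le
    obtain ⟨hsum, hle⟩ := inner_bound hn hm
    have hnn : (0:ℝ) ≤ ∑' l : ℕ, (1:ℝ) /
        ((4*(n:ℝ) + 2*l + 3) * (4*(n:ℝ) + 2*l + 5) * (4*(m:ℝ) + 2*l + 3) * (4*(m:ℝ) + 2*l + 5)) :=
      tsum_nonneg (fun l => by
        have : (0:ℝ) ≤ (l:ℝ) := Nat.cast_nonneg l
        positivity)
    have hsq : S (n, m) ≤ (1 / (128 * (n:ℝ)^2 * (m:ℝ)))^2 := by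
      rw [hS]
      exact pow_le_pow_left₀ hnn hle 2
    refine hsq.trans (le_of_eq ?_)
    have hn0 : (0:ℝ) < (n:ℝ) := by linarith
    have hm0 : (0:ℝ) < (m:ℝ) := by linarith
    field_simp
    ring
  have hSnonneg : ∀ p : ℕ+ × ℕ+, 0 ≤ S p := fun p => sq_nonneg _
  have hSsummable : Summable S := Summable.of_nonneg_of_le hSnonneg hbound hM.summable
  refine ⟨hSsummable, ?_⟩
  have := Summable.tsum_le_tsum hbound hSsummable hM.summable
  rw [hM.tsum_eq] at this
  refine this.trans ?_
  nlinarith [pow_nonneg Real.pi_pos.le 6, pow_nonneg Real.pi_pos.le 2, pow_nonneg Real.pi_pos.le 4, sq_nonneg (Real.pi^3)]
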